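/- Let p ≥ 1 and 1 ≤ j ≤ N−1, and suppose f_n ↣ f in L^p(T^N). For g ∈ L^1(T^N), define ĝ ∈ L^1(T^{N−j}) by ĝ(t_{j+1},…,t_N) = ∫_{T^j} g(·,t_{j+1},…,t_N) dμ_j (the average over the first j variables). Then f̂_n ↣ f̂ in L^p(T^{N−j}). -/

import Mathlib

open MeasureTheory Filter Topology Matrix
open scoped Classical ENNReal ComplexOrder

noncomputable section

/-- The unit circle `T`, parametrized as `ℝ / 2πℤ`. -/
abbrev 𝕋 : Type := AddCircle (2 * Real.pi)

instance : Fact (0 < 2 * Real.pi) := ⟨by positivity⟩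

/-- The normalized Lebesgue measure `dμ₁ = dt/(2π)` on the circle. -/
def μT : Measure 𝕋 := AddCircle.haarAddCircle

/-- The normalized Lebesgue measure on the `N`-torus. -/
def μTN (N : ℕ) : Measure (Fin N → 𝕋) := Measure.pi fun _ => μT

instance : IsProbabilityMeasure μT := by unfold μT; infer_instance
instance (N : ℕ) : IsProbabilityMeasure (μTN N) := by unfold μTN; infer_instance

/-- The point `e^{iθ}` of the unit circle of `ℂ` corresponding to `θ : 𝕋`. -/
def bpt (θ : 𝕋) : ℂ := (AddCircle.toCircle θ : ℂ)

/-- `F` is an analytic extension of the boundary function `f` witnessing `f ∈ H^p(T)`: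
`F` is analytic in the open unit disk, has `p`-means over circles of radius `r < 1`
bounded uniformly in `r`, and has radial limits `f` a.e. on the boundary. -/
structure HardyExt (p : ℝ) (f : 𝕋 → ℂ) (F : ℂ → ℂ) : Prop where
  diff : DifferentiableOn ℂ F (Metric.ball 0 1)
  bddMeans : ∃ C : ℝ, ∀ r : ℝ, 0 ≤ r → r < 1 →
    (∫ θ, ‖F ((r : ℂ) * bpt θ)‖ ^ p ∂μT) ≤ C
  boundary : ∀ᵐ θ ∂μT,
    Tendsto (fun r : ℝ => F ((r : ℂ) * bpt θ)) (nhdsWithin 1 (Set.Iio 1)) (nhds (f θ))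

/-- The classical Hardy space `H^p(T)` (p > 0), identified with boundary values in `L^p(T)`. -/
def MemHp (p : ℝ) (f : 𝕋 → ℂ) : Prop :=
  MemLp f (ENNReal.ofReal p) μT ∧ ∃ F, HardyExt p f F

/-- The value at `0` of the analytic extension of `f` (junk value `0` if `f ∉ H^p`). -/
def hardyVal0 (p : ℝ) (f : 𝕋 → ℂ) : ℂ :=
  if h : ∃ F, HardyExt p f F then h.choose 0 else 0

/-- Extended-real valued `log|z|`, with `log 0 = -∞`. -/
def elog (z : ℂ) : EReal := if z = 0 then ⊥ else ((Real.log ‖z‖ : ℝ) : EReal)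

/-- The extended-real valued integral `∫ log|f| dν` (possibly `-∞`;
junk `⊤`-valued only when the positive part fails to be integrable). -/
def logAbsIntegral {α : Type*} [MeasurableSpace α] (ν : Measure α) (f : α → ℂ) : EReal :=
  ((∫⁻ x, ENNReal.ofReal (Real.log ‖f x‖) ∂ν : ℝ≥0∞) : EReal) -
  ((∫⁻ x, (if f x = 0 then (⊤ : ℝ≥0∞)
          else ENNReal.ofReal (-(Real.log ‖f x‖))) ∂ν : ℝ≥0∞) : EReal)

/-- `f` is an outer function of the Hardy space `H^p(T)`:
`f ∈ H^p`, `f ≢ 0` and `log|f(0)| = ∫_T log|f| dμ₁`. -/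
def IsOuter1 (p : ℝ) (f : 𝕋 → ℂ) : Prop :=
  MemHp p f ∧ ¬ (f =ᵐ[μT] (fun _ => (0:ℂ))) ∧ elog (hardyVal0 p f) = logAbsIntegral μT f

/-- The slice `f_{t₂,…,t_N} = f(·,t₂,…,t_N)` in the first variable. -/
def slice1 {N : ℕ} (f : (Fin (N + 1) → 𝕋) → ℂ) (ts : Fin N → 𝕋) : 𝕋 → ℂ :=
  fun t => f (Fin.cons t ts)

/-- `f̂₁(t₂,…,t_N)`: the value at `0` of the analytic extension of the slice
`f(·,t₂,…,t_N)` to the unit disk. -/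
def hatF {N : ℕ} (p : ℝ) (f : (Fin (N + 1) → 𝕋) → ℂ) : (Fin N → 𝕋) → ℂ :=
  fun ts => hardyVal0 p (slice1 f ts)

/-- Membership in `H^p(T^N)`, `p > 0` (Definition 2.1, recursive in `N`). -/
def MemHpN : (N : ℕ) → ℝ → ((Fin N → 𝕋) → ℂ) → Prop
  | 0, _, _ => False
  | 1, p, f => MemHp p (fun t => f (fun _ => t))
  | (N + 2), p, f =>
      MemLp f (ENNReal.ofReal p) (μTN (N + 2)) ∧
      (∀ᵐ ts ∂μTN (N + 1), MemHp p (slice1 f ts)) ∧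
      MemHpN (N + 1) p (hatF p f)

/-- Membership in the outer class `H^p_O(T^N)` (Definition 2.2, recursive in `N`). -/
def MemHpON : (N : ℕ) → ℝ → ((Fin N → 𝕋) → ℂ) → Prop
  | 0, _, _ => False
  | 1, p, f => IsOuter1 p (fun t => f (fun _ => t))
  | (N + 2), p, f =>
      (∀ᵐ ts ∂μTN (N + 1), IsOuter1 p (slice1 f ts)) ∧
      MemHpON (N + 1) p (hatF p f)

/-- Iterated hat: `f̂_k`, taking the value at 0 of the analytic extension in the
first variable `k` times, landing on functions of one variable. -/
def hatIter (p : ℝ) : (k : ℕ) → ((Fin (k + 1) → 𝕋) → ℂ) → ((Fin 1 → 𝕋) → ℂ)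
  | 0, f => f
  | (k + 1), f => hatIter p k (hatF p f)

/-- `f(0,…,0)`: the value at the origin of the successive analytic extensions. -/
def valOrigin (p : ℝ) {k : ℕ} (f : (Fin (k + 1) → 𝕋) → ℂ) : ℂ :=
  hardyVal0 p (fun t => hatIter p k f (fun _ => t))

/-- The half-plane `H_N ⊂ ℤ^N` of lattice points. -/
def halfPlane : (N : ℕ) → (Fin N → ℤ) → Prop
  | 0, _ => True
  | (N + 1), k => 0 < k 0 ∨ (k 0 = 0 ∧ halfPlane N (fun i => k i.succ))

/-- Fourier coefficients `C_k{f}` on the N-torus. -/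
def fourierCoeffN {N : ℕ} (f : (Fin N → 𝕋) → ℂ) (k : Fin N → ℤ) : ℂ :=
  ∫ t, f t * ∏ i, bpt (t i) ^ (-(k i)) ∂μTN N

/-- Fourier coefficients on the circle. -/
def fourierCoeffT (f : 𝕋 → ℂ) (k : ℤ) : ℂ := ∫ t, f t * bpt t ^ (-k) ∂μT

/-- `f` is of analytic type on `T^N` and in `L^p`: the analytic-type definition
of `H^p(T^N)` for `p ≥ 1`. -/
def MemAnalyticType (N : ℕ) (p : ℝ) (f : (Fin N → 𝕋) → ℂ) : Prop :=
  MemLp f (ENNReal.ofReal p) (μTN N) ∧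
    ∀ k : Fin N → ℤ, ¬ halfPlane N k → fourierCoeffN f k = 0

/-- The slice of `f` in the first `a` of `N = a + b` variables,
with the last `b` variables frozen at `y`. -/
def splitL {N a b : ℕ} (h : a + b = N) (f : (Fin N → 𝕋) → ℂ) (y : Fin b → 𝕋) :
    (Fin a → 𝕋) → ℂ :=
  fun x => f fun i => Fin.append x y (Fin.cast h.symm i)

/-- `H^p(T^N_a)` (Definition 2.4): `f ∈ L^p(T^N)` and a.e. slice in the first `a`
variables belongs to `H^p(T^a)`. -/
def MemHpNl (p : ℝ) {N : ℕ} (a b : ℕ) (h : a + b = N) (f : (Fin N → 𝕋) → ℂ) : Prop :=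
  MemLp f (ENNReal.ofReal p) (μTN N) ∧ ∀ᵐ y ∂μTN b, MemHpN a p (splitL h f y)

/-- `H^p_O(T^N_a)` (Definition 2.4, outer version). -/
def MemHpONl (p : ℝ) {N : ℕ} (a b : ℕ) (h : a + b = N) (f : (Fin N → 𝕋) → ℂ) : Prop :=
  MemLp f (ENNReal.ofReal p) (μTN N) ∧ ∀ᵐ y ∂μTN b, MemHpON a p (splitL h f y)

/-- Matrix functions with entries in `H^p(T^N_a)`. -/
def MatMemHpNl (p : ℝ) {N : ℕ} (a b : ℕ) (h : a + b = N) {d : ℕ}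
    (F : (Fin N → 𝕋) → Matrix (Fin d) (Fin d) ℂ) : Prop :=
  ∀ i j, MemHpNl p a b h (fun t => F t i j)

/-- Outer-type matrix functions of `H^2(T^N_a)_O^{d×d}`: entries in `H^2(T^N_a)`
and determinant in `H^r_O(T^N_a)` for some `r > 0`. -/
def MatOuterHpNl {N : ℕ} (a b : ℕ) (h : a + b = N) {d : ℕ}
    (F : (Fin N → 𝕋) → Matrix (Fin d) (Fin d) ℂ) : Prop :=
  MatMemHpNl 2 a b h F ∧ ∃ r : ℝ, 0 < r ∧ MemHpONl r a b h (fun t => (F t).det)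

/-- Matrix functions with entries in `H^p(T^N)`. -/
def MatMemHpN (N : ℕ) (p : ℝ) {d : ℕ}
    (F : (Fin N → 𝕋) → Matrix (Fin d) (Fin d) ℂ) : Prop :=
  ∀ i j, MemHpN N p fun t => F t i j

/-- Outer-type matrix functions in `H^p(T^N)_O^{d×d}` (Definition 2.3). -/
def MatOuterHpN (N : ℕ) (p : ℝ) {d : ℕ}
    (F : (Fin N → 𝕋) → Matrix (Fin d) (Fin d) ℂ) : Prop :=
  MatMemHpN N p F ∧
    ∃ r : ℝ, 0 < r ∧ MemHpN N r (fun t => (F t).det) ∧ MemHpON N r (fun t => (F t).det)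

/-- Convergence `fs n → f` in the `L^p` norm. -/
def TendstoLp {α : Type*} [MeasurableSpace α] (p : ℝ) (ν : Measure α)
    (fs : ℕ → α → ℂ) (f : α → ℂ) : Prop :=
  Tendsto (fun n => eLpNorm (fs n - f) (ENNReal.ofReal p) ν) atTop (nhds 0)

/-- Convergence "restricted to hyperplanes" `fs ↣ f` in `L^p(T^N)`. -/
def HypTendsto (p : ℝ) (N : ℕ) (fs : ℕ → (Fin N → 𝕋) → ℂ) (f : (Fin N → 𝕋) → ℂ) : Prop :=
  TendstoLp p (μTN N) fs f ∧
  ∀ (a b : ℕ) (h : a + b = N), 1 ≤ a → 1 ≤ b →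
    ∀ᵐ y ∂μTN b, TendstoLp p (μTN a) (fun n => splitL h (fs n) y) (splitL h f y)

/-- The average of `f` over the first `a` of `N = a + b` variables. -/
def avgFirst {N : ℕ} (a b : ℕ) (h : a + b = N) (f : (Fin N → 𝕋) → ℂ) :
    (Fin b → 𝕋) → ℂ :=
  fun y => ∫ x, splitL h f y x ∂μTN a

lemma cotHalf_periodic :
    Function.Periodic (fun x : ℝ => Real.cos (x / 2) / Real.sin (x / 2)) (2 * Real.pi) := by
  intro x
  have h : (x + 2 * Real.pi) / 2 = x / 2 + Real.pi := by ring
  simp only [h, Real.cos_add_pi, Real.sin_add_pi, neg_div_neg_eq]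

/-- The kernel `cot(θ/2)` as a function on the circle. -/
def cotHalf : 𝕋 → ℝ := cotHalf_periodic.lift

/-- The conjugate function (boundary Hilbert transform) of `h : 𝕋 → ℝ`,
`𝒮(h)(e^{iτ}) = (1/2π) p.v.∫ h(e^{iθ}) cot((τ-θ)/2) dθ`, as a principal value. -/
def conjFn (h : 𝕋 → ℝ) (τ : 𝕋) : ℝ :=
  limUnder (nhdsWithin 0 (Set.Ioi (0 : ℝ)))
    (fun ε : ℝ => (2 * Real.pi)⁻¹ * ∫ θ in {θ : 𝕋 | ε < dist τ θ}, h θ * cotHalf (τ - θ))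

/-- The operator `𝒮₁`: the conjugate function applied in the first variable. -/
def conj1 {N : ℕ} (h : (Fin (N + 1) → 𝕋) → ℝ) (t : Fin (N + 1) → 𝕋) : ℝ :=
  conjFn (fun s => h (Fin.cons s (fun i => t i.succ))) (t 0)

end

noncomputable section

namespace Statement10Aux

/-- Jensen's inequality for the `lintegral` on a probability space: `(∫⁻ g)^p ≤ ∫⁻ g^p`. -/
lemma lintegral_rpow_jensen {α : Type*} [MeasurableSpace α] (μ : Measure α)
    [IsProbabilityMeasure μ] {p : ℝ} (hp : 1 ≤ p) {g : α → ℝ≥0∞}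
    (hg : AEMeasurable g μ) :
    (∫⁻ a, g a ∂μ) ^ p ≤ ∫⁻ a, g a ^ p ∂μ := by
  rcases eq_or_lt_of_le hp with h1 | h1
  · simp [← h1]
  · have hp0 : (0 : ℝ) < p := lt_trans one_pos h1
    have hpq := Real.HolderConjugate.conjExponent h1
    have h := ENNReal.lintegral_mul_le_Lp_mul_Lq μ hpq hg
      (aemeasurable_const (b := (1 : ℝ≥0∞)))
    simp only [Pi.mul_apply, mul_one, ENNReal.one_rpow, lintegral_const, measure_univ,
      ENNReal.one_rpow, mul_one] at h
    calc (∫⁻ a, g a ∂μ) ^ p ≤ ((∫⁻ a, g a ^ p ∂μ) ^ (1 / p)) ^ p :=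
          ENNReal.rpow_le_rpow h hp0.le
      _ = ∫⁻ a, g a ^ p ∂μ := by
          rw [← ENNReal.rpow_mul, one_div, inv_mul_cancel₀ hp0.ne', ENNReal.rpow_one]

/-- Minkowski's integral inequality (weak form, probability measures):
the `L^p` norm of a partial integral is at most the `L^p` norm on the product. -/
lemma eLpNorm_integral_fst_le {α β : Type*} [MeasurableSpace α] [MeasurableSpace β]
    {μ : Measure α} {ν : Measure β} [IsProbabilityMeasure μ] [IsProbabilityMeasure ν]
    {p : ℝ} (hp : 1 ≤ p) {F : α × β → ℂ} (hF : AEStronglyMeasurable F (μ.prod ν)) :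
    eLpNorm (fun y => ∫ x, F (x, y) ∂μ) (ENNReal.ofReal p) ν ≤
      eLpNorm F (ENNReal.ofReal p) (μ.prod ν) := by
  have hp0 : (0 : ℝ) < p := lt_of_lt_of_le one_pos hp
  have hq0 : ENNReal.ofReal p ≠ 0 := by
    simp [ENNReal.ofReal_eq_zero, not_le, hp0]
  have hqt : ENNReal.ofReal p ≠ ∞ := ENNReal.ofReal_ne_top
  rw [eLpNorm_eq_lintegral_rpow_enorm_toReal hq0 hqt, eLpNorm_eq_lintegral_rpow_enorm_toReal hq0 hqt,
    ENNReal.toReal_ofReal hp0.le]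
  refine ENNReal.rpow_le_rpow ?_ (by positivity)
  have hswap : AEStronglyMeasurable (fun z : β × α => F z.swap) (ν.prod μ) := hF.prod_swap
  have hsl : ∀ᵐ y ∂ν, AEMeasurable (fun x => (‖F (x, y)‖₊ : ℝ≥0∞)) μ := by
    filter_upwards [hswap.prodMk_left] with y hy using hy.enorm
  calc ∫⁻ y, (‖∫ x, F (x, y) ∂μ‖₊ : ℝ≥0∞) ^ p ∂ν
      ≤ ∫⁻ y, ∫⁻ x, (‖F (x, y)‖₊ : ℝ≥0∞) ^ p ∂μ ∂ν := by
        refine lintegral_mono_ae ?_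
        filter_upwards [hsl] with y hy
        calc (‖∫ x, F (x, y) ∂μ‖₊ : ℝ≥0∞) ^ p
            ≤ (∫⁻ x, (‖F (x, y)‖₊ : ℝ≥0∞) ∂μ) ^ p :=
              ENNReal.rpow_le_rpow (enorm_integral_le_lintegral_enorm _) hp0.le
          _ ≤ ∫⁻ x, (‖F (x, y)‖₊ : ℝ≥0∞) ^ p ∂μ := lintegral_rpow_jensen μ hp hy
    _ = ∫⁻ z, (‖F z‖₊ : ℝ≥0∞) ^ p ∂(μ.prod ν) := by
        exact (lintegral_prod_symm (fun z : α × β => (‖F z‖₊ : ℝ≥0∞) ^ p)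
          (hF.enorm.pow aemeasurable_const)).symm

/-- The map assembling the first `j` and last `m` coordinates is measure preserving. -/
lemma measurePreserving_append {j m N : ℕ} (hN : j + m = N) :
    MeasurePreserving
      (fun q : (Fin j → 𝕋) × (Fin m → 𝕋) =>
        (fun i => Fin.append q.1 q.2 (Fin.cast hN.symm i) : Fin N → 𝕋))
      ((μTN j).prod (μTN m)) (μTN N) := by
  have h1 := measurePreserving_sumPiEquivProdPi_symm (fun _ : Fin j ⊕ Fin m => μT)
  have h2 := measurePreserving_piCongrLeft (fun _ : Fin N => μT)
    (finSumFinEquiv.trans (finCongr hN))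
  have hcomp := h2.comp h1
  have hfun : (⇑(MeasurableEquiv.piCongrLeft (fun _ : Fin N => 𝕋)
        (finSumFinEquiv.trans (finCongr hN))) ∘
      ⇑(MeasurableEquiv.sumPiEquivProdPi (fun _ : Fin j ⊕ Fin m => 𝕋)).symm) =
      fun q : (Fin j → 𝕋) × (Fin m → 𝕋) =>
        (fun i => Fin.append q.1 q.2 (Fin.cast hN.symm i) : Fin N → 𝕋) := by
    funext q
    funext i
    obtain ⟨k, rfl⟩ := (finSumFinEquiv.trans (finCongr hN)).surjective i
    rw [Function.comp_apply, MeasurableEquiv.coe_piCongrLeft,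
      Equiv.piCongrLeft_apply_apply]
    have hc : Fin.cast hN.symm ((finSumFinEquiv.trans (finCongr hN)) k) = finSumFinEquiv k := by
      ext
      simp [Fin.coe_cast]
    rw [hc]
    rw [MeasurableEquiv.coe_sumPiEquivProdPi_symm]
    cases k with
    | inl i0 =>
        rw [finSumFinEquiv_apply_left, Fin.append_left]
        rfl
    | inr i0 =>
        rw [finSumFinEquiv_apply_right, Fin.append_right]
        rfl
  rw [hfun] at hcomp
  exact hcomp

/-- The `L^p` norm of the average over the first `j` variables is at most the `L^p` norm. -/
lemma eLpNorm_avgFirst_le (p : ℝ) (hp : 1 ≤ p) {j m N : ℕ} (hN : j + m = N)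
    {g : (Fin N → 𝕋) → ℂ} (hg : AEStronglyMeasurable g (μTN N)) :
    eLpNorm (avgFirst j m hN g) (ENNReal.ofReal p) (μTN m) ≤
      eLpNorm g (ENNReal.ofReal p) (μTN N) := by
  have hmp := measurePreserving_append hN
  have hF : AEStronglyMeasurable
      (g ∘ fun q : (Fin j → 𝕋) × (Fin m → 𝕋) =>
        (fun i => Fin.append q.1 q.2 (Fin.cast hN.symm i) : Fin N → 𝕋))
      ((μTN j).prod (μTN m)) :=
    hg.comp_quasiMeasurePreserving hmp.quasiMeasurePreserving
  calc eLpNorm (avgFirst j m hN g) (ENNReal.ofReal p) (μTN m)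
      = eLpNorm (fun y => ∫ x,
          (g ∘ fun q : (Fin j → 𝕋) × (Fin m → 𝕋) =>
            (fun i => Fin.append q.1 q.2 (Fin.cast hN.symm i) : Fin N → 𝕋)) (x, y) ∂μTN j)
          (ENNReal.ofReal p) (μTN m) := rfl
    _ ≤ eLpNorm (g ∘ fun q : (Fin j → 𝕋) × (Fin m → 𝕋) =>
          (fun i => Fin.append q.1 q.2 (Fin.cast hN.symm i) : Fin N → 𝕋))
          (ENNReal.ofReal p) ((μTN j).prod (μTN m)) := eLpNorm_integral_fst_le hp hF
    _ = eLpNorm g (ENNReal.ofReal p) (μTN N) := eLpNorm_comp_measurePreserving hg hmp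

/-- The average over the first `j` variables of a difference is a.e. the difference of the
averages, for integrable functions. -/
lemma avgFirst_sub_ae {j m N : ℕ} (hN : j + m = N) {g h : (Fin N → 𝕋) → ℂ}
    (hg : Integrable g (μTN N)) (hh : Integrable h (μTN N)) :
    avgFirst j m hN (g - h) =ᵐ[μTN m] avgFirst j m hN g - avgFirst j m hN h := by
  have hmp := measurePreserving_append hN
  have hg' := ((hmp.integrable_comp hg.aestronglyMeasurable).2 hg).prod_left_ae
  have hh' := ((hmp.integrable_comp hh.aestronglyMeasurable).2 hh).prod_left_ae
  filter_upwards [hg', hh'] with y hgy hhy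
  have hgy' : Integrable (fun x => splitL hN g y x) (μTN j) := hgy
  have hhy' : Integrable (fun x => splitL hN h y x) (μTN j) := hhy
  show (∫ x, splitL hN (g - h) y x ∂μTN j) = _
  have heq : (fun x => splitL hN (g - h) y x) =
      fun x => splitL hN g y x - splitL hN h y x := rfl
  rw [heq, integral_sub hgy' hhy']
  rfl

/-- Averaging over the first `j` variables is continuous from `L^p(T^N)` to `L^p(T^m)`. -/
lemma tendstoLp_avgFirst (p : ℝ) (hp : 1 ≤ p) {j m N : ℕ} (hN : j + m = N)
    {gs : ℕ → (Fin N → 𝕋) → ℂ} {g : (Fin N → 𝕋) → ℂ}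
    (hgs : ∀ n, Integrable (gs n) (μTN N)) (hg : Integrable g (μTN N))
    (hc : TendstoLp p (μTN N) gs g) :
    TendstoLp p (μTN m) (fun n => avgFirst j m hN (gs n)) (avgFirst j m hN g) := by
  have key : ∀ n,
      eLpNorm (avgFirst j m hN (gs n) - avgFirst j m hN g) (ENNReal.ofReal p) (μTN m)
      ≤ eLpNorm (gs n - g) (ENNReal.ofReal p) (μTN N) := by
    intro n
    rw [← eLpNorm_congr_ae (avgFirst_sub_ae hN (hgs n) hg)]
    exact eLpNorm_avgFirst_le p hp hN ((hgs n).aestronglyMeasurable.sub hg.aestronglyMeasurable)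
  exact tendsto_of_tendsto_of_tendsto_of_le_of_le tendsto_const_nhds hc
    (fun n => zero_le) key

/-- Slicing the last `b` variables commutes with averaging over the first `j` variables. -/
lemma splitL_avgFirst (j a b : ℕ) (g : (Fin (j + (a + b)) → 𝕋) → ℂ)
    (h'' : (j + a) + b = j + (a + b)) (h1 : a + b = a + b) (h2 : j + (a + b) = j + (a + b))
    (h3 : j + a = j + a) (y : Fin b → 𝕋) :
    splitL h1 (avgFirst j (a + b) h2 g) y = avgFirst j a h3 (splitL h'' g y) := by
  funext x
  show (∫ u, g (fun i => Fin.append u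
        (fun i' => Fin.append x y (Fin.cast h1.symm i')) (Fin.cast h2.symm i)) ∂μTN j)
      = ∫ u, g (fun i => Fin.append
        (fun i2 => Fin.append u x (Fin.cast h3.symm i2)) y (Fin.cast h''.symm i)) ∂μTN j
  congr 1
  funext u
  congr 1
  funext i
  have e1 : (fun i' => Fin.append x y (Fin.cast h1.symm i')) = Fin.append x y := by
    funext i'; congr 1
  have e2 : (fun i2 => Fin.append u x (Fin.cast h3.symm i2)) = Fin.append u x := by
    funext i2; congr 1
  rw [e1, e2]
  rw [congrFun (Fin.append_assoc u x y) (Fin.cast h''.symm i), Function.comp_apply]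
  exact congrArg (Fin.append u (Fin.append x y)) (by ext; simp [Fin.coe_cast])

end Statement10Aux

open Statement10Aux

/-- **Lemma 7.2.** If `fₙ ↣ f` in `L^p(T^N)` and `1 ≤ j ≤ N - 1`,
then the averages over the first `j` variables satisfy `f̂ₙ ↣ f̂` in `L^p(T^{N-j})`. -/
theorem statement10 (p : ℝ) (hp : 1 ≤ p) (j m N : ℕ) (hj : 1 ≤ j) (hm : 1 ≤ m)
    (hN : j + m = N)
    (fs : ℕ → (Fin N → 𝕋) → ℂ) (f : (Fin N → 𝕋) → ℂ)
    (hmem : ∀ n, MemLp (fs n) (ENNReal.ofReal p) (μTN N))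
    (hfmem : MemLp f (ENNReal.ofReal p) (μTN N))
    (hconv : HypTendsto p N fs f) :
    HypTendsto p m (fun n => avgFirst j m hN (fs n)) (avgFirst j m hN f) := by
  have hq1 : (1 : ℝ≥0∞) ≤ ENNReal.ofReal p := by
    rw [← ENNReal.ofReal_one]; exact ENNReal.ofReal_le_ofReal hp
  constructor
  · exact tendstoLp_avgFirst p hp hN (fun n => (hmem n).integrable hq1)
      (hfmem.integrable hq1) hconv.1
  · intro a b h' ha hb
    subst hN
    subst h'
    have h'' : (j + a) + b = j + (a + b) := Nat.add_assoc j a b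
    have hsl := hconv.2 (j + a) b h'' (by omega) hb
    have hint : ∀ n, ∀ᵐ y ∂μTN b, Integrable (splitL h'' (fs n) y) (μTN (j + a)) := by
      intro n
      have h1 : Integrable ((fs n) ∘ fun q : (Fin (j + a) → 𝕋) × (Fin b → 𝕋) =>
            (fun i => Fin.append q.1 q.2 (Fin.cast h''.symm i) : Fin (j + (a + b)) → 𝕋))
          ((μTN (j + a)).prod (μTN b)) :=
        ((measurePreserving_append h'').integrable_comp
          ((hmem n).integrable hq1).aestronglyMeasurable).2 ((hmem n).integrable hq1)
      exact h1.prod_left_ae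
    have hintf : ∀ᵐ y ∂μTN b, Integrable (splitL h'' f y) (μTN (j + a)) := by
      have h1 : Integrable (f ∘ fun q : (Fin (j + a) → 𝕋) × (Fin b → 𝕋) =>
            (fun i => Fin.append q.1 q.2 (Fin.cast h''.symm i) : Fin (j + (a + b)) → 𝕋))
          ((μTN (j + a)).prod (μTN b)) :=
        ((measurePreserving_append h'').integrable_comp
          (hfmem.integrable hq1).aestronglyMeasurable).2 (hfmem.integrable hq1)
      exact h1.prod_left_ae
    filter_upwards [hsl, hintf, MeasureTheory.ae_all_iff.2 hint] with y hy hfy hny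
    have hT := tendstoLp_avgFirst p hp (rfl : j + a = j + a) hny hfy hy
    have e1 : (fun n => splitL rfl (avgFirst j (a + b) rfl (fs n)) y) =
        fun n => avgFirst j a rfl (splitL h'' (fs n) y) := by
      funext n
      exact splitL_avgFirst j a b (fs n) h'' rfl rfl rfl y
    have e2 : splitL rfl (avgFirst j (a + b) rfl f) y = avgFirst j a rfl (splitL h'' f y) :=
      splitL_avgFirst j a b f h'' rfl rfl rfl y
    rw [e1, e2]
    exact hT

end
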